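/- On the elliptic curve C : y² = x³ − 98415x + 11691702, the involution τ(x,y) = (81(2x−567)/(x−162), −19683y/(x−162)²) equals the map P ↦ −P + T, where T = (162, 0) is a 2-torsion point and −P denotes (x, −y); i.e., τ(P) = (x, −y) + (162, 0) in the group law. -/

import Mathlib

open WeierstrassCurve

/-- The elliptic curve C₅₄ : y² = x³ - 98415x + 11691702. -/
noncomputable def C54 : Affine ℚ :=
  { a₁ := 0, a₂ := 0, a₃ := 0, a₄ := -98415, a₆ := 11691702 }

/-- The involution τ equals P ↦ -P + (162, 0) in the group law. -/
theorem stmt12 (x y : ℚ) (h : C54.Nonsingular x y) (hx : x ≠ 162) :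
    ∃ (hτ : C54.Nonsingular (81 * (2 * x - 567) / (x - 162))
        (-19683 * y / (x - 162) ^ 2))
      (hneg : C54.Nonsingular x (-y)) (hT : C54.Nonsingular 162 0),
      Affine.Point.some _ _ hτ = Affine.Point.some _ _ hneg + Affine.Point.some _ _ hT := by
  have hxne : x - 162 ≠ 0 := sub_ne_zero.mpr hx
  have heq : y ^ 2 = x ^ 3 - 98415 * x + 11691702 := by
    have := (C54.equation_iff x y).mp h.1
    simp only [C54] at this
    linarith
  have hneg : C54.Nonsingular x (-y) := by
    have := (Affine.nonsingular_neg ..).mpr h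
    simpa [Affine.negY, C54] using this
  have hT : C54.Nonsingular 162 0 := by
    simp only [Affine.nonsingular_iff, Affine.equation_iff, C54]
    norm_num
  have hslope : C54.slope x 162 (-y) 0 = -y / (x - 162) := by
    rw [Affine.slope_of_X_ne hx]; ring_nf
  have h' : C54.Nonsingular (C54.addX x 162 (C54.slope x 162 (-y) 0))
      (C54.addY x 162 (-y) (C54.slope x 162 (-y) 0)) :=
    Affine.nonsingular_add hneg hT fun h => absurd h.1 hx
  have ha : C54.addX x 162 (C54.slope x 162 (-y) 0) = 81 * (2 * x - 567) / (x - 162) := by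
    rw [hslope]
    simp only [Affine.addX, C54]
    field_simp
    linear_combination heq
  have hb : C54.addY x 162 (-y) (C54.slope x 162 (-y) 0) = -19683 * y / (x - 162) ^ 2 := by
    rw [hslope]
    simp only [Affine.addY, Affine.negAddY, Affine.negY, Affine.addX, C54]
    field_simp
    linear_combination y * heq
  rw [ha, hb] at h'
  refine ⟨h', hneg, hT, ?_⟩
  rw [Affine.Point.add_of_X_ne hx]
  simp only [← ha, ← hb]
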